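/- arXiv:2303.11566 — 4 statements merged into one kernel-verified Lean document; each statement's English description precedes it below -/
import Mathlib

section
/- Let ρ0 and ρ1 be density matrices on ℂ^n, let τ ≥ 0, let A = ρ1 − τ·ρ0 (a Hermitian matrix), and let P* be the orthogonal projection onto the span of the eigenvectors of A with strictly positive eigenvalues. Then for every measurement operator P (i.e., Hermitian P with 0 ≤ P ≤ I), the Bayes risk satisfies τ·Tr(P*·ρ0) + Tr((I − P*)·ρ1) ≤ τ·Tr(P·ρ0) + Tr((I − P)·ρ1). In other words, the quantum likelihood-ratio projection P* minimizes the Bayes risk for quantum binary detection. -/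
open Matrix ComplexOrder

/-- A density matrix on ℂ^n: Hermitian, positive semidefinite, trace 1. -/
def Matrix.IsDensityMatrix {n : ℕ} (ρ : Matrix (Fin n) (Fin n) ℂ) : Prop :=
  ρ.IsHermitian ∧ ρ.PosSemidef ∧ ρ.trace = 1

/-- A measurement operator: Hermitian `P` with `0 ≤ P ≤ I`, i.e. both `P` and
`1 - P` are positive semidefinite. -/
def Matrix.IsMeasurement {n : ℕ} (P : Matrix (Fin n) (Fin n) ℂ) : Prop :=
  P.IsHermitian ∧ P.PosSemidef ∧ (1 - P).PosSemidef

/-- The orthogonal projection onto the span of the eigenvectors of a Hermitian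
matrix `A` with strictly positive eigenvalues,
`P* = Σ_{η_j > 0} |η_j⟩⟨η_j|` in terms of a spectral decomposition of `A`. -/
noncomputable def Matrix.IsHermitian.posEigenProj {n : ℕ}
    {A : Matrix (Fin n) (Fin n) ℂ} (hA : A.IsHermitian) : Matrix (Fin n) (Fin n) ℂ :=
  (hA.eigenvectorUnitary : Matrix (Fin n) (Fin n) ℂ) *
    Matrix.diagonal (fun j => if 0 < hA.eigenvalues j then (1 : ℂ) else 0) *
    star (hA.eigenvectorUnitary : Matrix (Fin n) (Fin n) ℂ)

/-- Diagonal entries of a positive semidefinite matrix are nonnegative. -/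
lemma psd_diag_nonneg {n : ℕ} {M : Matrix (Fin n) (Fin n) ℂ} (hM : M.PosSemidef) (j : Fin n) :
    0 ≤ M j j := by
  have := hM.dotProduct_mulVec_nonneg (Pi.single j 1)
  simpa [dotProduct, Pi.single_apply, mulVec] using this

/-- Key inequality: among `0 ≤ P ≤ 1`, the projection onto the positive eigenspaces
maximizes `Tr(P A)`. -/
lemma trace_mul_le_posEigenProj {n : ℕ} {A : Matrix (Fin n) (Fin n) ℂ} (hA : A.IsHermitian)
    (P : Matrix (Fin n) (Fin n) ℂ) (hP : P.PosSemidef) (hP1 : (1 - P).PosSemidef) :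
    (P * A).trace ≤ (hA.posEigenProj * A).trace := by
  rw [Matrix.IsHermitian.posEigenProj]
  set U : Matrix (Fin n) (Fin n) ℂ := (hA.eigenvectorUnitary : Matrix (Fin n) (Fin n) ℂ) with hU
  have hUU : star U * U = 1 := (Matrix.mem_unitaryGroup_iff').mp hA.eigenvectorUnitary.2
  set D : Matrix (Fin n) (Fin n) ℂ := Matrix.diagonal (RCLike.ofReal ∘ hA.eigenvalues) with hD
  set D' : Matrix (Fin n) (Fin n) ℂ :=
    Matrix.diagonal (fun j => if 0 < hA.eigenvalues j then (1 : ℂ) else 0) with hD'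
  have hspec : A = U * D * star U := hA.spectral_theorem
  set Q : Matrix (Fin n) (Fin n) ℂ := star U * P * U with hQ
  have hQpsd : Q.PosSemidef := by
    exact hP.conjTranspose_mul_mul_same U
  have hQ1psd : (1 - Q).PosSemidef := by
    have h := hP1.conjTranspose_mul_mul_same U
    have e : Uᴴ * (1 - P) * U = 1 - Q := by
      have : (Uᴴ : Matrix (Fin n) (Fin n) ℂ) = star U := rfl
      rw [Matrix.mul_sub, Matrix.sub_mul, mul_one, this, hUU, hQ]
    rwa [e] at h
  have h1 : (P * A).trace = (Q * D).trace := by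
    rw [hspec, show P * (U * D * star U) = (P * (U * D)) * star U by noncomm_ring,
      Matrix.trace_mul_comm, hQ]
    congr 1; noncomm_ring
  have h2 : ((U * D' * star U) * A).trace = (D' * D).trace := by
    rw [hspec, show U * D' * star U * (U * D * star U) = (U * (D' * (star U * U) * D)) * star U
      by noncomm_ring, hUU, mul_one, Matrix.trace_mul_comm, ← mul_assoc, hUU, one_mul]
  rw [h1, h2]
  rw [Matrix.trace, Matrix.trace]
  apply Finset.sum_le_sum
  intro j _
  rw [Matrix.diag_apply, Matrix.diag_apply, hD, hD', Matrix.mul_diagonal, Matrix.mul_diagonal]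
  simp only [Function.comp_apply, Matrix.diagonal_apply_eq]
  rw [show (RCLike.ofReal (hA.eigenvalues j) : ℂ) = ((hA.eigenvalues j : ℝ) : ℂ) from rfl]
  rcases lt_or_ge 0 (hA.eigenvalues j) with h | h
  · rw [if_pos h]
    have h1Q : 0 ≤ 1 - Q j j := by
      have := psd_diag_nonneg hQ1psd j
      simpa using this
    have hl : (0:ℂ) ≤ (hA.eigenvalues j : ℂ) := by
      rw [Complex.le_def]; simp [le_of_lt h]
    have := mul_le_mul_of_nonneg_right (by simpa [sub_nonneg] using h1Q : Q j j ≤ 1) hl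
    simpa using this
  · rw [if_neg (not_lt.mpr h)]
    rw [zero_mul]
    have hq : 0 ≤ Q j j := psd_diag_nonneg hQpsd j
    apply mul_nonpos_of_nonneg_of_nonpos hq
    rw [Complex.le_def]; simp [h]

/-- The quantum likelihood-ratio projection `P*` (projection onto the
positive eigenspaces of `A = ρ1 - τ • ρ0`) minimizes the Bayes risk
`τ·Tr(P·ρ0) + Tr((I - P)·ρ1)` over all measurement operators `P`. -/
theorem qlrt_minimizes_bayes_risk {n : ℕ} (ρ0 ρ1 : Matrix (Fin n) (Fin n) ℂ)
    (hρ0 : ρ0.IsDensityMatrix) (hρ1 : ρ1.IsDensityMatrix) (τ : ℝ) (hτ : 0 ≤ τ)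
    {A : Matrix (Fin n) (Fin n) ℂ} (hAdef : A = ρ1 - (τ : ℂ) • ρ0) (hA : A.IsHermitian)
    (P : Matrix (Fin n) (Fin n) ℂ) (hP : P.IsMeasurement) :
    (τ : ℂ) * (hA.posEigenProj * ρ0).trace + ((1 - hA.posEigenProj) * ρ1).trace ≤
      (τ : ℂ) * (P * ρ0).trace + ((1 - P) * ρ1).trace := by
  have key : ∀ X : Matrix (Fin n) (Fin n) ℂ,
      (τ : ℂ) * (X * ρ0).trace + ((1 - X) * ρ1).trace = ρ1.trace - (X * A).trace := by
    intro X
    rw [hAdef]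
    simp only [Matrix.mul_sub, Matrix.sub_mul, Matrix.mul_smul, Matrix.trace_sub,
      Matrix.trace_smul, smul_eq_mul, one_mul]
    ring
  rw [key, key]
  exact sub_le_sub_left (trace_mul_le_posEigenProj hA P hP.2.1 hP.2.2) _
end

section
/- Let ρ0 and ρ1 be density matrices on ℂ^n, let τ ≥ 0, let A = ρ1 − τ·ρ0, and let P* be the orthogonal projection onto the span of the eigenvectors of A with strictly positive eigenvalues. Then P* maximizes Tr(P·A) over all measurement operators P with 0 ≤ P ≤ I, and the maximum value equals the sum of the strictly positive eigenvalues of A: Tr(P*·A) = Σ_{η_j > 0} η_j, where η_1, …, η_n are the eigenvalues of A. -/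
open Matrix ComplexOrder

lemma aux_diag_nonneg {n : ℕ} {Q : Matrix (Fin n) (Fin n) ℂ} (h : Q.PosSemidef)
    (j : Fin n) : 0 ≤ Q j j := by
  exact h.diag_nonneg


/-- `P*` maximizes `Tr(P·A)` over measurement operators `0 ≤ P ≤ I`,
and the maximum equals the sum of the strictly positive eigenvalues of `A`. -/
theorem posEigenProj_maximizes_trace {n : ℕ} (ρ0 ρ1 : Matrix (Fin n) (Fin n) ℂ)
    (hρ0 : ρ0.IsDensityMatrix) (hρ1 : ρ1.IsDensityMatrix) (τ : ℝ) (hτ : 0 ≤ τ)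
    {A : Matrix (Fin n) (Fin n) ℂ} (hAdef : A = ρ1 - (τ : ℂ) • ρ0) (hA : A.IsHermitian) :
    (∀ P : Matrix (Fin n) (Fin n) ℂ, P.IsMeasurement →
        (P * A).trace ≤ (hA.posEigenProj * A).trace) ∧
      (hA.posEigenProj * A).trace =
        ∑ j : Fin n, if 0 < hA.eigenvalues j then (hA.eigenvalues j : ℂ) else 0 := by
  set U : Matrix (Fin n) (Fin n) ℂ := (hA.eigenvectorUnitary : Matrix (Fin n) (Fin n) ℂ) with hU
  have hUU : U * star U = 1 := (Matrix.mem_unitaryGroup_iff).mp hA.eigenvectorUnitary.2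
  have hUU' : star U * U = 1 := (Matrix.mem_unitaryGroup_iff').mp hA.eigenvectorUnitary.2
  set D : Matrix (Fin n) (Fin n) ℂ :=
    diagonal (RCLike.ofReal ∘ hA.eigenvalues) with hD
  have hspec : A = U * D * star U := hA.spectral_theorem
  -- trace formula for any P
  have key : ∀ P : Matrix (Fin n) (Fin n) ℂ,
      (P * A).trace = ∑ j, (star U * P * U) j j * (hA.eigenvalues j : ℂ) := by
    intro P
    conv_lhs => rw [hspec]
    rw [show P * (U * D * star U) = (P * U * D) * star U by
        simp only [Matrix.mul_assoc],
      trace_mul_comm, ← Matrix.mul_assoc, ← Matrix.mul_assoc,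
      show star U * P * U * D = (star U * P * U) * D from rfl]
    rw [Matrix.trace]
    congr 1
    ext j
    simp [hD, Matrix.mul_diagonal, Matrix.diag]
  -- value at posEigenProj
  have hQproj : star U * hA.posEigenProj * U =
      diagonal (fun j => if 0 < hA.eigenvalues j then (1 : ℂ) else 0) := by
    rw [Matrix.IsHermitian.posEigenProj]
    rw [show star U * (U * diagonal (fun j => if 0 < hA.eigenvalues j then (1:ℂ) else 0)
        * star U) * U = (star U * U) * diagonal (fun j => if 0 < hA.eigenvalues j then (1:ℂ)
        else 0) * (star U * U) by simp only [Matrix.mul_assoc], hUU', one_mul, mul_one]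
  have hval : (hA.posEigenProj * A).trace =
      ∑ j : Fin n, if 0 < hA.eigenvalues j then (hA.eigenvalues j : ℂ) else 0 := by
    rw [key, hQproj]
    refine Finset.sum_congr rfl fun j _ => ?_
    by_cases h : 0 < hA.eigenvalues j <;> simp [h]
  refine ⟨fun P hP => ?_, hval⟩
  rw [key, hval]
  set Q : Matrix (Fin n) (Fin n) ℂ := star U * P * U with hQdef
  have hQpsd : Q.PosSemidef := by
    have := hP.2.1.conjTranspose_mul_mul_same U
    simpa [hQdef, Matrix.star_eq_conjTranspose] using this
  have hQpsd' : ((1 : Matrix (Fin n) (Fin n) ℂ) - Q).PosSemidef := by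
    have := hP.2.2.conjTranspose_mul_mul_same U
    have h2 : Uᴴ * (1 - P) * U = 1 - Q := by
      have h1 : Uᴴ * U = 1 := hUU'
      rw [Matrix.mul_sub, Matrix.mul_one, Matrix.sub_mul, hQdef,
        Matrix.star_eq_conjTranspose, h1]
    rwa [h2] at this
  apply Finset.sum_le_sum
  intro j _
  have h0 : (0 : ℂ) ≤ Q j j := aux_diag_nonneg hQpsd j
  have h1 : Q j j ≤ 1 := by
    have := aux_diag_nonneg hQpsd' j
    simp only [Matrix.sub_apply, Matrix.one_apply_eq] at this
    exact sub_nonneg.mp this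
  by_cases h : 0 < hA.eigenvalues j
  · simp only [h, if_true]
    calc Q j j * (hA.eigenvalues j : ℂ) ≤ 1 * (hA.eigenvalues j : ℂ) :=
          mul_le_mul_of_nonneg_right h1 (by exact_mod_cast h.le)
      _ = _ := one_mul _
  · simp only [h, if_false]
    have hd : (hA.eigenvalues j : ℂ) ≤ 0 := by
      exact_mod_cast not_lt.mp h
    calc Q j j * (hA.eigenvalues j : ℂ) ≤ Q j j * 0 :=
          mul_le_mul_of_nonneg_left hd h0
      _ = 0 := mul_zero _
end

section
/- Let ρ0 and ρ1 be density matrices on ℂ^n, let τ ≥ 0, and let A = ρ1 − τ·ρ0 with eigenvalues η_1, …, η_n. Then the minimum of the Bayes risk τ·Tr(P·ρ0) + Tr((I − P)·ρ1) over all measurement operators P with 0 ≤ P ≤ I equals 1 − Σ_{η_j > 0} η_j, i.e., one minus the sum of the strictly positive eigenvalues of A, and this minimum is attained by the orthogonal projection onto the span of the eigenvectors of A with strictly positive eigenvalues. -/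
open Matrix ComplexOrder

lemma psd_diag_nonneg_s4 {n : ℕ} {Q : Matrix (Fin n) (Fin n) ℂ} (hQ : Q.PosSemidef)
    (j : Fin n) : 0 ≤ Q j j := by
  exact hQ.diag_nonneg

lemma tr_conj {n : ℕ} (P U D : Matrix (Fin n) (Fin n) ℂ) :
    (P * (U * D * star U)).trace = ((star U * P * U) * D).trace := by
  rw [show P * (U * D * star U) = (P * U * D) * star U by simp only [Matrix.mul_assoc],
    trace_mul_comm]
  simp only [Matrix.mul_assoc]

/-- The minimum Bayes risk `τ·Tr(P·ρ0) + Tr((I - P)·ρ1)` over all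
measurement operators `0 ≤ P ≤ I` equals `1 - Σ_{η_j > 0} η_j` (one minus the sum of
the strictly positive eigenvalues of `A = ρ1 - τ • ρ0`), and it is attained by the
orthogonal projection `P*` onto the span of eigenvectors of `A` with strictly
positive eigenvalues. -/
theorem min_bayes_risk_value {n : ℕ} (ρ0 ρ1 : Matrix (Fin n) (Fin n) ℂ)
    (hρ0 : ρ0.IsDensityMatrix) (hρ1 : ρ1.IsDensityMatrix) (τ : ℝ) (hτ : 0 ≤ τ)
    {A : Matrix (Fin n) (Fin n) ℂ} (hAdef : A = ρ1 - (τ : ℂ) • ρ0) (hA : A.IsHermitian) :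
    (τ : ℂ) * (hA.posEigenProj * ρ0).trace + ((1 - hA.posEigenProj) * ρ1).trace =
        1 - ∑ j : Fin n, (if 0 < hA.eigenvalues j then (hA.eigenvalues j : ℂ) else 0) ∧
      ∀ P : Matrix (Fin n) (Fin n) ℂ, P.IsMeasurement →
        (τ : ℂ) * (hA.posEigenProj * ρ0).trace + ((1 - hA.posEigenProj) * ρ1).trace ≤
          (τ : ℂ) * (P * ρ0).trace + ((1 - P) * ρ1).trace := by
  set U : Matrix (Fin n) (Fin n) ℂ := (hA.eigenvectorUnitary : Matrix (Fin n) (Fin n) ℂ) with hU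
  have hUU : star U * U = 1 := Matrix.mem_unitaryGroup_iff'.mp hA.eigenvectorUnitary.2
  set S : ℂ := ∑ j : Fin n, (if 0 < hA.eigenvalues j then (hA.eigenvalues j : ℂ) else 0) with hS
  -- risk formula
  have risk : ∀ P : Matrix (Fin n) (Fin n) ℂ,
      (τ : ℂ) * (P * ρ0).trace + ((1 - P) * ρ1).trace = 1 - (P * A).trace := by
    intro P
    have hPA : (P * A).trace = (P * ρ1).trace - (τ : ℂ) * (P * ρ0).trace := by
      rw [hAdef, Matrix.mul_sub, Matrix.mul_smul, trace_sub, trace_smul, smul_eq_mul]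
    rw [Matrix.sub_mul, Matrix.one_mul, trace_sub, hρ1.2.2, hPA]
    ring
  -- trace of P* against A
  have hPstarA : (hA.posEigenProj * A).trace = S := by
    have h1 : (hA.posEigenProj * A).trace =
        ((star U * hA.posEigenProj * U) * diagonal (RCLike.ofReal ∘ hA.eigenvalues)).trace := by
      rw [← tr_conj]
      exact congrArg (fun B => (hA.posEigenProj * B).trace) hA.spectral_theorem
    have h2 : star U * hA.posEigenProj * U
        = diagonal (fun j => if 0 < hA.eigenvalues j then (1 : ℂ) else 0) := by
      rw [Matrix.IsHermitian.posEigenProj, ← hU]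
      rw [show star U * (U * diagonal (fun j => if 0 < hA.eigenvalues j then (1 : ℂ) else 0) * star U) * U
        = (star U * U) * diagonal (fun j => if 0 < hA.eigenvalues j then (1 : ℂ) else 0) * (star U * U) by
          simp only [Matrix.mul_assoc], hUU, one_mul, mul_one]
    rw [h1, h2, diagonal_mul_diagonal, trace_diagonal, hS]
    simp [ite_mul]
  refine ⟨by rw [risk, hPstarA], fun P hP => ?_⟩
  rw [risk, risk, hPstarA]
  refine sub_le_sub_left ?_ 1
  -- Tr(P A) ≤ S
  set Q : Matrix (Fin n) (Fin n) ℂ := star U * P * U with hQ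
  have hPA : (P * A).trace = (Q * diagonal (RCLike.ofReal ∘ hA.eigenvalues)).trace := by
    rw [← tr_conj]
    exact congrArg (fun B => (P * B).trace) hA.spectral_theorem
  have hQpsd : Q.PosSemidef := by
    have h := hP.2.1.conjTranspose_mul_mul_same U
    rw [← Matrix.star_eq_conjTranspose] at h
    exact h
  have h1Q : (1 - Q).PosSemidef := by
    have h := hP.2.2.conjTranspose_mul_mul_same U
    rw [← Matrix.star_eq_conjTranspose, Matrix.mul_sub, Matrix.mul_one, Matrix.sub_mul, hUU] at h
    exact h
  have htr : (Q * diagonal (RCLike.ofReal ∘ hA.eigenvalues)).trace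
      = ∑ j : Fin n, Q j j * (hA.eigenvalues j : ℂ) := by
    simp [Matrix.trace, Matrix.diag, Matrix.mul_diagonal, Function.comp]
  rw [hPA, htr, hS]
  refine Finset.sum_le_sum fun j _ => ?_
  have hq0 : 0 ≤ Q j j := psd_diag_nonneg_s4 hQpsd j
  have hq1 : Q j j ≤ 1 := by
    have h := psd_diag_nonneg_s4 h1Q j
    simp only [Matrix.sub_apply, Matrix.one_apply_eq] at h
    exact sub_nonneg.mp h
  by_cases h : 0 < hA.eigenvalues j
  · simp only [h, if_pos]
    exact mul_le_of_le_one_left (by exact_mod_cast h.le) hq1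
  · simp only [h, if_neg, not_false_iff]
    have hd : (hA.eigenvalues j : ℂ) ≤ 0 := by exact_mod_cast not_lt.mp h
    have := mul_le_mul_of_nonneg_left hd hq0
    simpa using this
end

section
/- Let ρ0 and ρ1 be density matrices on ℂ^n, let τ > 0, let A = ρ1 − τ·ρ0, and let P* be the orthogonal projection onto the span of the eigenvectors of A with strictly positive eigenvalues. Let w : [0,1] → ℝ be monotone nondecreasing, let p0, p1 ∈ [0,1], and let u01, u10 > 0 and u00, u11 < 0 be real constants. For a measurement operator P define the weighted risk u(P) = w(p0·Tr(P·ρ0))·u01 + w(p1·Tr(P·ρ1))·u11 + w(p0·(1 − Tr(P·ρ0)))·u00 + w(p1·(1 − Tr(P·ρ1)))·u10. Then for every measurement operator P' with 0 ≤ P' ≤ I whose detection rate equals that of P*, i.e., Tr(P'·ρ1) = Tr(P*·ρ1), one has u(P*) ≤ u(P'). That is, the quantum likelihood-ratio test P* achieves minimal weighted risk among all measurements with the same detection rate. -/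
open Matrix ComplexOrder

section Aux
variable {n : ℕ}

/-- diagonal entries of a PSD complex matrix: nonneg real part, zero imaginary part. -/
lemma psd_diag_re_nonneg {Q : Matrix (Fin n) (Fin n) ℂ} (hQ : Q.PosSemidef) (j : Fin n) :
    0 ≤ (Q j j).re ∧ (Q j j).im = 0 := by
  have h := hQ.dotProduct_mulVec_nonneg (Pi.single j 1)
  simp only [dotProduct, mulVec, Pi.star_apply, Pi.single_apply] at h
  have h2 : (0 : ℂ) ≤ Q j j := by
    simpa [dotProduct, mulVec, Pi.single_apply, Finset.sum_ite_eq, Finset.sum_ite_eq'] using h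
  rw [Complex.le_def] at h2
  exact ⟨h2.1, h2.2.symm⟩

lemma trace_spectral {B : Matrix (Fin n) (Fin n) ℂ} (hB : B.IsHermitian)
    (P : Matrix (Fin n) (Fin n) ℂ) :
    ((P * B).trace).re = ∑ j, hB.eigenvalues j *
      (((star (hB.eigenvectorUnitary : Matrix (Fin n) (Fin n) ℂ) * P *
        (hB.eigenvectorUnitary : Matrix (Fin n) (Fin n) ℂ)) j j).re) := by
  set U : Matrix (Fin n) (Fin n) ℂ := (hB.eigenvectorUnitary : Matrix (Fin n) (Fin n) ℂ)
  have hspec := hB.spectral_theorem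
  have : (P * B).trace = ((star U * P * U) * diagonal (RCLike.ofReal ∘ hB.eigenvalues)).trace := by
    conv_lhs => rw [hspec, Unitary.conjStarAlgAut_apply]
    rw [show P * (U * diagonal (RCLike.ofReal ∘ hB.eigenvalues) * star U)
        = (P * U * diagonal (RCLike.ofReal ∘ hB.eigenvalues)) * star U by
      simp only [Matrix.mul_assoc]]
    rw [trace_mul_comm]
    simp only [Matrix.mul_assoc]
  rw [this, Matrix.trace]
  simp only [Matrix.diag, Matrix.mul_diagonal, Function.comp_apply]
  rw [Complex.re_sum]
  congr 1
  funext j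
  simp [mul_comm, Complex.mul_re]

end Aux

section Aux2
variable {n : ℕ}

lemma conj_measurement {U P : Matrix (Fin n) (Fin n) ℂ} (hU : U ∈ Matrix.unitaryGroup (Fin n) ℂ)
    (hP : P.PosSemidef) (hP1 : (1 - P).PosSemidef) :
    (star U * P * U).PosSemidef ∧ (1 - star U * P * U).PosSemidef := by
  have hsU : star U * U = 1 := by
    simpa using (Matrix.mem_unitaryGroup_iff').mp hU
  have h1 : (star U * P * (star U)ᴴ).PosSemidef := hP.mul_mul_conjTranspose_same (star U)
  have h2 : (star U * (1 - P) * (star U)ᴴ).PosSemidef := hP1.mul_mul_conjTranspose_same (star U)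
  have hcoe : (star U)ᴴ = U := by
    simp [Matrix.star_eq_conjTranspose]
  rw [hcoe] at h1 h2
  refine ⟨h1, ?_⟩
  have : star U * (1 - P) * U = 1 - star U * P * U := by
    simp only [Matrix.mul_sub, Matrix.sub_mul, Matrix.mul_one, hsU]
  rwa [this] at h2

lemma meas_diag_mem {U P : Matrix (Fin n) (Fin n) ℂ} (hU : U ∈ Matrix.unitaryGroup (Fin n) ℂ)
    (hP : P.PosSemidef) (hP1 : (1 - P).PosSemidef) (j : Fin n) :
    ((star U * P * U) j j).re ∈ Set.Icc (0:ℝ) 1 := by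
  obtain ⟨hQ, hQ1⟩ := conj_measurement hU hP hP1
  refine ⟨(psd_diag_re_nonneg hQ j).1, ?_⟩
  have h := (psd_diag_re_nonneg hQ1 j).1
  simp only [Matrix.sub_apply, Matrix.one_apply_eq, Complex.sub_re, Complex.one_re] at h
  linarith

/-- trace of `P * B` for a measurement lies in `[0, Tr B]` style bound;
specialized: `0 ≤ re Tr(P*B) ≤ Σ eigenvalues` when all eigenvalues nonneg. -/
lemma trace_mem_Icc {B : Matrix (Fin n) (Fin n) ℂ} (hB : B.IsHermitian)
    (hBpsd : B.PosSemidef) (hBtr : B.trace = 1)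
    {P : Matrix (Fin n) (Fin n) ℂ} (hP : P.PosSemidef) (hP1 : (1 - P).PosSemidef) :
    ((P * B).trace).re ∈ Set.Icc (0:ℝ) 1 := by
  set U : Matrix (Fin n) (Fin n) ℂ := (hB.eigenvectorUnitary : Matrix (Fin n) (Fin n) ℂ) with hUdef
  have hU : U ∈ Matrix.unitaryGroup (Fin n) ℂ := hB.eigenvectorUnitary.2
  have hev : ∀ j, 0 ≤ hB.eigenvalues j := fun j => hBpsd.eigenvalues_nonneg j
  have hsum : ∑ j, hB.eigenvalues j = 1 := by
    have h1 : (((1 : Matrix (Fin n) (Fin n) ℂ) * B).trace).re = 1 := by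
      rw [Matrix.one_mul, hBtr]; simp
    rw [trace_spectral hB 1] at h1
    have hsU : star U * U = 1 := by simpa using (Matrix.mem_unitaryGroup_iff').mp hU
    simp only [Matrix.mul_one, ← hUdef, hsU] at h1
    simpa [Matrix.one_apply] using h1
  rw [trace_spectral hB P]
  constructor
  · apply Finset.sum_nonneg
    intro j _
    exact mul_nonneg (hev j) (meas_diag_mem hU hP hP1 j).1
  · calc ∑ j, hB.eigenvalues j * ((star U * P * U) j j).re
        ≤ ∑ j, hB.eigenvalues j := by
          apply Finset.sum_le_sum
          intro j _
          nlinarith [(meas_diag_mem hU hP hP1 j).1, (meas_diag_mem hU hP hP1 j).2, hev j]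
      _ = 1 := hsum

end Aux2


section Aux3
variable {n : ℕ} {A : Matrix (Fin n) (Fin n) ℂ} (hA : A.IsHermitian)

lemma conj_posEigenProj :
    star (hA.eigenvectorUnitary : Matrix (Fin n) (Fin n) ℂ) * hA.posEigenProj *
      (hA.eigenvectorUnitary : Matrix (Fin n) (Fin n) ℂ) =
    Matrix.diagonal (fun j => if 0 < hA.eigenvalues j then (1 : ℂ) else 0) := by
  set U : Matrix (Fin n) (Fin n) ℂ := (hA.eigenvectorUnitary : Matrix (Fin n) (Fin n) ℂ) with hUdef
  set D : Matrix (Fin n) (Fin n) ℂ :=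
    Matrix.diagonal (fun j => if 0 < hA.eigenvalues j then (1 : ℂ) else 0) with hDdef
  have hsU : star U * U = 1 := (Matrix.mem_unitaryGroup_iff').mp hA.eigenvectorUnitary.2
  show star U * (U * D * star U) * U = D
  calc star U * (U * D * star U) * U
      = (star U * U) * D * (star U * U) := by simp only [Matrix.mul_assoc]
    _ = D := by rw [hsU, Matrix.one_mul, Matrix.mul_one]

lemma posEigenProj_psd : hA.posEigenProj.PosSemidef ∧ (1 - hA.posEigenProj).PosSemidef := by
  set U : Matrix (Fin n) (Fin n) ℂ := (hA.eigenvectorUnitary : Matrix (Fin n) (Fin n) ℂ) with hUdef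
  have hUU : U * star U = 1 := (Matrix.mem_unitaryGroup_iff).mp hA.eigenvectorUnitary.2
  have hd : (0 : (Fin n → ℂ)) ≤ fun j => if 0 < hA.eigenvalues j then (1 : ℂ) else 0 := by
    intro j
    dsimp
    split <;> simp
  have h1 : (U * Matrix.diagonal (fun j => if 0 < hA.eigenvalues j then (1:ℂ) else 0) * Uᴴ).PosSemidef :=
    (Matrix.PosSemidef.diagonal hd).mul_mul_conjTranspose_same U
  have hcoe : Uᴴ = star U := rfl
  rw [hcoe] at h1
  refine ⟨h1, ?_⟩
  have hd2 : (0 : (Fin n → ℂ)) ≤ fun j => 1 - (if 0 < hA.eigenvalues j then (1 : ℂ) else 0) := by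
    intro j
    dsimp
    split <;> simp
  have h2 : (U * Matrix.diagonal (fun j => 1 - (if 0 < hA.eigenvalues j then (1:ℂ) else 0)) * Uᴴ).PosSemidef :=
    (Matrix.PosSemidef.diagonal hd2).mul_mul_conjTranspose_same U
  rw [hcoe] at h2
  have heq : U * Matrix.diagonal (fun j => 1 - (if 0 < hA.eigenvalues j then (1:ℂ) else 0)) * star U
      = 1 - hA.posEigenProj := by
    have : Matrix.diagonal (fun j => 1 - (if 0 < hA.eigenvalues j then (1:ℂ) else 0))
        = 1 - Matrix.diagonal (fun j => if 0 < hA.eigenvalues j then (1:ℂ) else 0) := by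
      rw [← Matrix.diagonal_one, Matrix.diagonal_sub]
    rw [this, Matrix.mul_sub, Matrix.sub_mul, Matrix.mul_one, hUU]
    rfl
  rwa [heq] at h2

lemma key_ineq {P' : Matrix (Fin n) (Fin n) ℂ} (hP : P'.PosSemidef) (hP1 : (1 - P').PosSemidef) :
    ((P' * A).trace).re ≤ ((hA.posEigenProj * A).trace).re := by
  rw [trace_spectral hA P', trace_spectral hA hA.posEigenProj, conj_posEigenProj hA]
  apply Finset.sum_le_sum
  intro j _
  have hmem := meas_diag_mem hA.eigenvectorUnitary.2 hP hP1 j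
  simp only [Matrix.diagonal_apply_eq]
  by_cases h : 0 < hA.eigenvalues j
  · simp only [h, if_true, Complex.one_re, mul_one]
    nlinarith [hmem.2]
  · simp only [h, if_false, Complex.zero_re, mul_zero]
    push_neg at h
    nlinarith [hmem.1]

end Aux3

/-- The quantum likelihood-ratio projection `P*` (positive-eigenspace
projection of `A = ρ1 - τ • ρ0`, `τ > 0`) achieves minimal weighted risk
`u(P) = w(p0·Tr(P·ρ0))·u01 + w(p1·Tr(P·ρ1))·u11 + w(p0·(1 - Tr(P·ρ0)))·u00 +
w(p1·(1 - Tr(P·ρ1)))·u10` among all measurements `P'` whose detection rate equals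
that of `P*`. -/
theorem qlrt_minimal_weighted_risk {n : ℕ} (ρ0 ρ1 : Matrix (Fin n) (Fin n) ℂ)
    (hρ0 : ρ0.IsDensityMatrix) (hρ1 : ρ1.IsDensityMatrix) (τ : ℝ) (hτ : 0 < τ)
    {A : Matrix (Fin n) (Fin n) ℂ} (hAdef : A = ρ1 - (τ : ℂ) • ρ0) (hA : A.IsHermitian)
    (w : ℝ → ℝ) (hw : MonotoneOn w (Set.Icc 0 1))
    (p0 p1 : ℝ) (hp0 : p0 ∈ Set.Icc (0 : ℝ) 1) (hp1 : p1 ∈ Set.Icc (0 : ℝ) 1)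
    (u01 u10 u00 u11 : ℝ) (hu01 : 0 < u01) (hu10 : 0 < u10)
    (hu00 : u00 < 0) (hu11 : u11 < 0)
    (u : Matrix (Fin n) (Fin n) ℂ → ℝ)
    (hu : ∀ P : Matrix (Fin n) (Fin n) ℂ, u P =
      w (p0 * ((P * ρ0).trace).re) * u01 + w (p1 * ((P * ρ1).trace).re) * u11 +
        w (p0 * (1 - ((P * ρ0).trace).re)) * u00 +
          w (p1 * (1 - ((P * ρ1).trace).re)) * u10)
    (P' : Matrix (Fin n) (Fin n) ℂ) (hP' : P'.IsMeasurement)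
    (hdet : (P' * ρ1).trace = (hA.posEigenProj * ρ1).trace) :
    u hA.posEigenProj ≤ u P' := by
  obtain ⟨hρ0H, hρ0psd, hρ0tr⟩ := hρ0
  obtain ⟨hρ1H, hρ1psd, hρ1tr⟩ := hρ1
  obtain ⟨_, hP'psd, hP'1psd⟩ := hP'
  obtain ⟨hPpsd, hP1psd⟩ := posEigenProj_psd hA
  set P : Matrix (Fin n) (Fin n) ℂ := hA.posEigenProj with hPdef
  set x0 : ℝ := ((P * ρ0).trace).re with hx0def
  set x0' : ℝ := ((P' * ρ0).trace).re with hx0'def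
  have hx0 : x0 ∈ Set.Icc (0:ℝ) 1 := trace_mem_Icc hρ0H hρ0psd hρ0tr hPpsd hP1psd
  have hx0' : x0' ∈ Set.Icc (0:ℝ) 1 := trace_mem_Icc hρ0H hρ0psd hρ0tr hP'psd hP'1psd
  have hy : ((P' * ρ1).trace).re = ((P * ρ1).trace).re := by rw [hdet]
  have hkey : ((P' * A).trace).re ≤ ((P * A).trace).re := key_ineq hA hP'psd hP'1psd
  have hexp : ∀ Q : Matrix (Fin n) (Fin n) ℂ, ((Q * A).trace).re
      = ((Q * ρ1).trace).re - τ * ((Q * ρ0).trace).re := by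
    intro Q
    rw [hAdef, Matrix.mul_sub, Matrix.mul_smul, Matrix.trace_sub, Matrix.trace_smul,
      Complex.sub_re]
    congr 1
    simp [Complex.smul_re]
  rw [hexp, hexp, hy] at hkey
  have hxle : x0 ≤ x0' := by nlinarith
  rw [hu, hu]
  have hmem1 : p0 * x0 ∈ Set.Icc (0:ℝ) 1 :=
    ⟨mul_nonneg hp0.1 hx0.1, mul_le_one₀ hp0.2 hx0.1 hx0.2⟩
  have hmem2 : p0 * x0' ∈ Set.Icc (0:ℝ) 1 :=
    ⟨mul_nonneg hp0.1 hx0'.1, mul_le_one₀ hp0.2 hx0'.1 hx0'.2⟩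
  have hmem3 : p0 * (1 - x0) ∈ Set.Icc (0:ℝ) 1 :=
    ⟨mul_nonneg hp0.1 (by linarith [hx0.2]), mul_le_one₀ hp0.2 (by linarith [hx0.2]) (by linarith [hx0.1])⟩
  have hmem4 : p0 * (1 - x0') ∈ Set.Icc (0:ℝ) 1 :=
    ⟨mul_nonneg hp0.1 (by linarith [hx0'.2]), mul_le_one₀ hp0.2 (by linarith [hx0'.2]) (by linarith [hx0'.1])⟩
  have hw1 : w (p0 * x0) ≤ w (p0 * x0') :=
    hw hmem1 hmem2 (mul_le_mul_of_nonneg_left hxle hp0.1)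
  have hw3 : w (p0 * (1 - x0')) ≤ w (p0 * (1 - x0)) :=
    hw hmem4 hmem3 (mul_le_mul_of_nonneg_left (by linarith) hp0.1)
  rw [hy]
  have ht1 : w (p0 * x0) * u01 ≤ w (p0 * x0') * u01 :=
    mul_le_mul_of_nonneg_right hw1 hu01.le
  have ht3 : w (p0 * (1 - x0)) * u00 ≤ w (p0 * (1 - x0')) * u00 :=
    mul_le_mul_of_nonpos_right hw3 hu00.le
  linarith
end
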